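/- Let Q = (V₂, S₂, D₂) be a coexistence equilibrium (all components positive) of the system with η > 1. Then V₂ satisfies the quadratic V₂² + MV₂ + m = 0, where M = (σ - (η_D - η)D₂ - η)/(η - 1), m = ηε/(β(η-1)), σ = 1 - ε/(α(1-μ)), and D₂ = αμ/(β-γ). -/

import Mathlib

/-- At a coexistence equilibrium with η > 1, V₂ satisfies
V₂² + MV₂ + m = 0 with M = (σ - (η_D - η)D₂ - η)/(η-1), m = ηε/(β(η-1)),
σ = 1 - ε/(α(1-μ)), D₂ = αμ/(β-γ). -/
theorem stmt14 (α β γ ε μ η ηD : ℝ)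
    (hα : 0 < α) (hβ : 0 < β) (hγ : 0 < γ) (hε : 0 < ε)
    (hμ0 : 0 < μ) (hμ1 : μ < 1) (hη : 1 < η) (hηD : 1 < ηD) (hβγ : β > γ)
    (V S D : ℝ) (hV : 0 < V) (hS : 0 < S) (hD : 0 < D)
    (h1 : α * (1 - μ) * V * (1 - V - η * S - ηD * D) - ε * V = 0)
    (h2 : β * V * S * (1 - V - S - D) - ε * S = 0)
    (h3 : (α * μ + γ * D) * V * (1 - V - S - D) - ε * D = 0) :
    let σ : ℝ := 1 - ε / (α * (1 - μ))
    let D₂ : ℝ := α * μ / (β - γ)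
    let M : ℝ := (σ - (ηD - η) * D₂ - η) / (η - 1)
    let m : ℝ := η * ε / (β * (η - 1))
    V ^ 2 + M * V + m = 0 := by
  intro σ D₂ M m
  have hV' : V ≠ 0 := ne_of_gt hV
  have hS' : S ≠ 0 := ne_of_gt hS
  have hαμ : α * (1 - μ) > 0 := by nlinarith
  have hαμ' : α * (1 - μ) ≠ 0 := ne_of_gt hαμ
  have hβγ' : β - γ ≠ 0 := by linarith
  have hη1 : η - 1 ≠ 0 := by linarith
  have hβ' : β ≠ 0 := ne_of_gt hβ
  have hε' : ε ≠ 0 := ne_of_gt hε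
  -- e1 : α(1-μ)(1-V-ηS-ηD D) = ε
  have e1 : α * (1 - μ) * (1 - V - η * S - ηD * D) = ε :=
    mul_right_cancel₀ hV' (by linear_combination h1)
  -- e2 : β V (1-V-S-D) = ε
  have e2 : β * V * (1 - V - S - D) = ε :=
    mul_right_cancel₀ hS' (by linear_combination h2)
  -- e3 : (αμ + γD) V (1-V-S-D) = ε D
  have e3 : (α * μ + γ * D) * (V * (1 - V - S - D)) = ε * D := by
    linear_combination h3
  -- from e2, e3: αμ + γ D = β D
  have e4 : α * μ + γ * D = β * D := by
    have h5 : (α * μ + γ * D) * ε = β * (ε * D) := by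
      calc (α * μ + γ * D) * ε
          = β * ((α * μ + γ * D) * (V * (1 - V - S - D))) := by rw [← e2]; ring
        _ = β * (ε * D) := by rw [e3]
    exact mul_right_cancel₀ hε' (by linear_combination h5)
  -- the cleared-denominator quadratic
  have key : α * (1 - μ) * β * (β - γ) * (η - 1) * V ^ 2
      - α * (1 - μ) * β * (β - γ) * (η - 1) * V
      - α * (1 - μ) * (α * μ) * β * (ηD - η) * V
      - β * (β - γ) * ε * V
      + α * (1 - μ) * (β - γ) * η * ε = 0 := by
    linear_combination (-(β - γ) * (α * (1 - μ)) * η) * e2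
      + (β - γ) * β * V * e1 - α * (1 - μ) * β * (ηD - η) * V * e4
  have hC : α * (1 - μ) * β * (β - γ) * (η - 1) ≠ 0 := by positivity
  show V ^ 2 + ((1 - ε / (α * (1 - μ)) - (ηD - η) * (α * μ / (β - γ)) - η) / (η - 1)) * V
      + η * ε / (β * (η - 1)) = 0
  have hrw : V ^ 2 + ((1 - ε / (α * (1 - μ)) - (ηD - η) * (α * μ / (β - γ)) - η) / (η - 1)) * V
      + η * ε / (β * (η - 1))
      = (α * (1 - μ) * β * (β - γ) * (η - 1) * V ^ 2
      - α * (1 - μ) * β * (β - γ) * (η - 1) * V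
      - α * (1 - μ) * (α * μ) * β * (ηD - η) * V
      - β * (β - γ) * ε * V
      + α * (1 - μ) * (β - γ) * η * ε) / (α * (1 - μ) * β * (β - γ) * (η - 1)) := by
    have h1μ : 1 - μ ≠ 0 := ne_of_gt (by linarith)
    have hα' : α ≠ 0 := ne_of_gt hα
    field_simp
    ring
  rw [hrw, key, zero_div]
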